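/- Let Θ ⊆ ℝ be bounded, let g₀ be a probability measure on Θ supported on exactly J points, and let g be any probability measure on Θ. Fix θ₀ ∈ Θ and set M := sup_{θ∈Θ} |θ−θ₀|, m_{k,g} := ∫ (θ−θ₀)^k dg(θ), and Δ_g := max_{1≤k≤2J} |m_{k,g} − m_{k,g₀}|. Then for every integer k > 2J, |m_{k,g} − m_{k,g₀}| ≤ k (M+1)^{2Jk} Δ_g. -/

import Mathlib

open MeasureTheory Finset

lemma poly_expand (M : ℝ) : ∀ (L : List ℝ), (∀ c ∈ L, |c| ≤ M) →
    ∃ a : ℕ → ℝ, (∀ i, L.length < i → a i = 0) ∧ a L.length = 1 ∧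
      (∑ i ∈ Finset.range (L.length + 1), |a i|) ≤ (1 + M) ^ L.length ∧
      ∀ y : ℝ, (L.map (fun c => y - c)).prod = ∑ i ∈ Finset.range (L.length + 1), a i * y ^ i := by
  intro L
  induction L with
  | nil =>
    intro _
    refine ⟨fun i => if i = 0 then 1 else 0, ?_, by simp, by simp, by simp⟩
    intro i hi
    simp only [List.length_nil] at hi
    show (if i = 0 then (1:ℝ) else 0) = 0
    rw [if_neg (by omega)]
  | cons c L ih =>
    intro hL
    obtain ⟨a, ha0, halead, hasum, haev⟩ := ih (fun x hx => hL x (List.mem_cons_of_mem _ hx))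
    have hcM : |c| ≤ M := hL c List.mem_cons_self
    have hM0 : 0 ≤ M := le_trans (abs_nonneg c) hcM
    refine ⟨fun i => (if i = 0 then 0 else a (i - 1)) - c * a i, ?_, ?_, ?_, ?_⟩
    · intro i hi
      simp only [List.length_cons] at hi
      have h1 : a (i - 1) = 0 := ha0 _ (by omega)
      have h2 : a i = 0 := ha0 _ (by omega)
      simp [h1, h2, (by omega : ¬ i = 0)]
    · simp only [List.length_cons]
      have h2 : a (L.length + 1) = 0 := ha0 _ (by omega)
      simp [h2, halead]
    · simp only [List.length_cons]
      have step1 : ∑ i ∈ Finset.range (L.length + 2), |(if i = 0 then 0 else a (i - 1)) - c * a i|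
          ≤ (∑ i ∈ Finset.range (L.length + 2), |if i = 0 then 0 else a (i - 1)|)
            + |c| * ∑ i ∈ Finset.range (L.length + 2), |a i| := by
        rw [Finset.mul_sum, ← Finset.sum_add_distrib]
        apply Finset.sum_le_sum
        intro i _
        calc |(if i = 0 then 0 else a (i - 1)) - c * a i|
            ≤ |if i = 0 then 0 else a (i - 1)| + |c * a i| := abs_sub _ _
          _ = |if i = 0 then 0 else a (i - 1)| + |c| * |a i| := by rw [abs_mul]
      have e1 : ∑ i ∈ Finset.range (L.length + 2), |if i = 0 then 0 else a (i - 1)|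
          = ∑ i ∈ Finset.range (L.length + 1), |a i| := by
        rw [Finset.sum_range_succ']
        simp
      have e2 : ∑ i ∈ Finset.range (L.length + 2), |a i|
          = ∑ i ∈ Finset.range (L.length + 1), |a i| := by
        rw [Finset.sum_range_succ, ha0 _ (by omega)]
        simp
      have habs : 0 ≤ ∑ i ∈ Finset.range (L.length + 1), |a i| :=
        Finset.sum_nonneg fun _ _ => abs_nonneg _
      calc ∑ i ∈ Finset.range (L.length + 2), |(if i = 0 then 0 else a (i - 1)) - c * a i|
          ≤ (∑ i ∈ Finset.range (L.length + 1), |a i|)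
            + |c| * ∑ i ∈ Finset.range (L.length + 1), |a i| := by
            rw [e1, e2] at step1
            exact step1
        _ ≤ (1 + M) ^ L.length + M * (1 + M) ^ L.length :=
            add_le_add hasum (mul_le_mul hcM hasum habs hM0)
        _ = (1 + M) ^ (L.length + 1) := by ring
    · intro y
      simp only [List.map_cons, List.prod_cons, List.length_cons]
      rw [haev y]
      have expand : ∑ i ∈ Finset.range (L.length + 2),
            ((if i = 0 then 0 else a (i - 1)) - c * a i) * y ^ i
          = (∑ i ∈ Finset.range (L.length + 2), (if i = 0 then 0 else a (i - 1)) * y ^ i)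
            - c * ∑ i ∈ Finset.range (L.length + 2), a i * y ^ i := by
        rw [Finset.mul_sum, ← Finset.sum_sub_distrib]
        exact Finset.sum_congr rfl fun i _ => by ring
      rw [expand]
      have h1 : ∑ i ∈ Finset.range (L.length + 2), (if i = 0 then 0 else a (i - 1)) * y ^ i
          = y * ∑ i ∈ Finset.range (L.length + 1), a i * y ^ i := by
        rw [Finset.sum_range_succ', Finset.mul_sum]
        simp only [Nat.add_sub_cancel, Nat.succ_ne_zero, if_false, if_pos rfl, ite_true,
          zero_mul, add_zero]
        exact Finset.sum_congr rfl fun i _ => by ring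
      have h2 : ∑ i ∈ Finset.range (L.length + 2), a i * y ^ i
          = ∑ i ∈ Finset.range (L.length + 1), a i * y ^ i := by
        rw [Finset.sum_range_succ, ha0 _ (by omega)]
        simp
      rw [h1, h2]
      ring

lemma integrable_pow_aux (Θ : Set ℝ) (θ₀ M : ℝ) (hMb : ∀ θ ∈ Θ, |θ - θ₀| ≤ M)
    (ν : Measure ℝ) [IsFiniteMeasure ν] (hae : ∀ᵐ θ ∂ν, θ ∈ Θ) (n : ℕ) :
    Integrable (fun θ => (θ - θ₀) ^ n) ν := by
  apply Integrable.mono' (integrable_const (M ^ n))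
  · exact Continuous.aestronglyMeasurable (by continuity)
  · filter_upwards [hae] with θ hθ
    rw [Real.norm_eq_abs, abs_pow]
    exact pow_le_pow_left₀ (abs_nonneg _) (hMb θ hθ) n

lemma integral_poly_aux (θ₀ : ℝ) (n t : ℕ) (a : ℕ → ℝ) (ν : Measure ℝ)
    (hint : ∀ j : ℕ, Integrable (fun θ => (θ - θ₀) ^ j) ν) :
    ∫ θ, (∑ i ∈ Finset.range n, a i * (θ - θ₀) ^ i) * (θ - θ₀) ^ t ∂ν
      = ∑ i ∈ Finset.range n, a i * ∫ θ, (θ - θ₀) ^ (i + t) ∂ν := by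
  have key : ∀ θ : ℝ, (∑ i ∈ Finset.range n, a i * (θ - θ₀) ^ i) * (θ - θ₀) ^ t
      = ∑ i ∈ Finset.range n, a i * (θ - θ₀) ^ (i + t) := by
    intro θ
    rw [Finset.sum_mul]
    exact Finset.sum_congr rfl fun i _ => by rw [pow_add]; ring
  simp_rw [key]
  rw [integral_finset_sum _ (fun i _ => (hint (i + t)).const_mul _)]
  exact Finset.sum_congr rfl fun i _ => integral_const_mul _ _

lemma integrable_poly_aux (θ₀ : ℝ) (n t : ℕ) (a : ℕ → ℝ) (ν : Measure ℝ)
    (hint : ∀ j : ℕ, Integrable (fun θ => (θ - θ₀) ^ j) ν) :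
    Integrable (fun θ => (∑ i ∈ Finset.range n, a i * (θ - θ₀) ^ i) * (θ - θ₀) ^ t) ν := by
  have key : ∀ θ : ℝ, (∑ i ∈ Finset.range n, a i * (θ - θ₀) ^ i) * (θ - θ₀) ^ t
      = ∑ i ∈ Finset.range n, a i * (θ - θ₀) ^ (i + t) := by
    intro θ
    rw [Finset.sum_mul]
    exact Finset.sum_congr rfl fun i _ => by rw [pow_add]; ring
  simp_rw [key]
  exact integrable_finset_sum _ (fun i _ => (hint (i + t)).const_mul _)

theorem stmt_0 (Θ : Set ℝ) (hΘ : Bornology.IsBounded Θ)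
    (g g₀ : Measure ℝ) [IsProbabilityMeasure g] [IsProbabilityMeasure g₀]
    (hg : g Θᶜ = 0)
    (J : ℕ) (hJ : 1 ≤ J)
    (S : Finset ℝ) (hScard : S.card = J) (hSΘ : ↑S ⊆ Θ)
    (hg₀S : g₀ (↑S : Set ℝ)ᶜ = 0) (hatoms : ∀ θ ∈ S, g₀ {θ} ≠ 0)
    (θ₀ : ℝ) (hθ₀ : θ₀ ∈ Θ)
    (M : ℝ) (hM : M = sSup ((fun θ => |θ - θ₀|) '' Θ))
    (m : ℕ → Measure ℝ → ℝ) (hm : ∀ k ν, m k ν = ∫ θ, (θ - θ₀) ^ k ∂ν)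
    (Δ : ℝ)
    (hΔ : Δ = (Finset.Icc 1 (2 * J)).sup' (Finset.nonempty_Icc.mpr (by omega))
      (fun k => |m k g - m k g₀|))
    (k : ℕ) (hk : 2 * J < k) :
    |m k g - m k g₀| ≤ (k : ℝ) * (M + 1) ^ (2 * J * k) * Δ := by
  -- basic bounds on M
  obtain ⟨R, hR⟩ := hΘ.exists_norm_le
  have hbdd : BddAbove ((fun θ => |θ - θ₀|) '' Θ) := by
    refine ⟨R + |θ₀|, ?_⟩
    rintro y ⟨θ, hθ, rfl⟩
    calc |θ - θ₀| ≤ |θ| + |θ₀| := abs_sub _ _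
      _ ≤ R + |θ₀| := by have := hR θ hθ; rw [Real.norm_eq_abs] at this; linarith
  have hMb : ∀ θ ∈ Θ, |θ - θ₀| ≤ M := fun θ hθ => hM ▸ le_csSup hbdd ⟨θ, hθ, rfl⟩
  have hM0 : 0 ≤ M := le_trans (abs_nonneg (θ₀ - θ₀)) (hMb θ₀ hθ₀)
  have hM1 : (1 : ℝ) ≤ M + 1 := by linarith
  -- a.e. membership
  have haeg : ∀ᵐ θ ∂g, θ ∈ Θ := by
    rw [MeasureTheory.ae_iff]; exact hg
  have haeg₀S : ∀ᵐ θ ∂g₀, θ ∈ (↑S : Set ℝ) := by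
    rw [MeasureTheory.ae_iff]; exact hg₀S
  have haeg₀ : ∀ᵐ θ ∂g₀, θ ∈ Θ := haeg₀S.mono fun θ h => hSΘ h
  -- integrability
  have hintg : ∀ j : ℕ, Integrable (fun θ => (θ - θ₀) ^ j) g :=
    integrable_pow_aux Θ θ₀ M hMb g haeg
  have hintg₀ : ∀ j : ℕ, Integrable (fun θ => (θ - θ₀) ^ j) g₀ :=
    integrable_pow_aux Θ θ₀ M hMb g₀ haeg₀
  -- the polynomial
  have hLlist : ∀ c ∈ (S.toList.map (fun s => s - θ₀)) ++ (S.toList.map (fun s => s - θ₀)),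
      |c| ≤ M := by
    intro c hc
    rcases List.mem_append.mp hc with h | h <;>
    · obtain ⟨s, hs, rfl⟩ := List.mem_map.mp h
      exact hMb s (hSΘ (Finset.mem_toList.mp hs))
  obtain ⟨a, ha0, halead, hasum, haev⟩ := poly_expand M _ hLlist
  have hlen : ((S.toList.map (fun s => s - θ₀)) ++ (S.toList.map (fun s => s - θ₀))).length
      = 2 * J := by
    simp [Finset.length_toList, hScard]; ring
  rw [hlen] at ha0 halead hasum haev
  set P : ℝ → ℝ := fun y => ∑ i ∈ Finset.range (2 * J + 1), a i * y ^ i with hP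
  have hPnn : ∀ y, 0 ≤ P y := by
    intro y
    rw [hP]
    simp only
    rw [← haev y, List.map_append, List.prod_append]
    exact mul_self_nonneg _
  have hPzero : ∀ s ∈ S, P (s - θ₀) = 0 := by
    intro s hs
    rw [hP]
    simp only
    rw [← haev (s - θ₀), List.map_append, List.prod_append]
    have h0 : (0 : ℝ) ∈ (S.toList.map (fun s => s - θ₀)).map (fun c => s - θ₀ - c) :=
      List.mem_map.mpr ⟨s - θ₀, List.mem_map.mpr ⟨s, Finset.mem_toList.mpr hs, rfl⟩, by ring⟩
    rw [List.prod_eq_zero h0, zero_mul]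
  -- basic moment facts
  have he0 : m 0 g - m 0 g₀ = 0 := by
    rw [hm, hm]
    simp
  have heΔ : ∀ n, 1 ≤ n → n ≤ 2 * J → |m n g - m n g₀| ≤ Δ := by
    intro n h1 h2
    rw [hΔ]
    exact Finset.le_sup' (fun n => |m n g - m n g₀|) (Finset.mem_Icc.mpr ⟨h1, h2⟩)
  have hΔ0 : 0 ≤ Δ := le_trans (abs_nonneg _) (heΔ 1 le_rfl (by omega))
  -- integral identities
  have hIg : ∀ t : ℕ, (∫ θ, P (θ - θ₀) * (θ - θ₀) ^ t ∂g)
      = ∑ i ∈ Finset.range (2 * J + 1), a i * m (i + t) g := by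
    intro t
    rw [integral_poly_aux θ₀ (2 * J + 1) t a g hintg]
    exact Finset.sum_congr rfl fun i _ => by rw [hm]
  have hIg₀ : ∀ t : ℕ, (∫ θ, P (θ - θ₀) * (θ - θ₀) ^ t ∂g₀) = 0 := by
    intro t
    apply integral_eq_zero_of_ae
    filter_upwards [haeg₀S] with θ hθ
    simp [hPzero θ hθ]
  have hIg₀' : ∀ t : ℕ, (0:ℝ) = ∑ i ∈ Finset.range (2 * J + 1), a i * m (i + t) g₀ := by
    intro t
    rw [← hIg₀ t, integral_poly_aux θ₀ (2 * J + 1) t a g₀ hintg₀]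
    exact Finset.sum_congr rfl fun i _ => by rw [hm]
  -- difference identity
  have hdiff : ∀ t : ℕ, (∫ θ, P (θ - θ₀) * (θ - θ₀) ^ t ∂g)
      = ∑ i ∈ Finset.range (2 * J + 1), a i * (m (i + t) g - m (i + t) g₀) := by
    intro t
    rw [hIg t]
    rw [show (∑ i ∈ Finset.range (2 * J + 1), a i * (m (i + t) g - m (i + t) g₀))
      = (∑ i ∈ Finset.range (2 * J + 1), a i * m (i + t) g)
        - ∑ i ∈ Finset.range (2 * J + 1), a i * m (i + t) g₀ by
        rw [← Finset.sum_sub_distrib]; exact Finset.sum_congr rfl fun i _ => by ring]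
    rw [← hIg₀' t]
    ring
  -- bound on ∫ P dg
  have hP0bound : (∫ θ, P (θ - θ₀) * (θ - θ₀) ^ 0 ∂g) ≤ (1 + M) ^ (2 * J) * Δ := by
    rw [hdiff 0]
    calc ∑ i ∈ Finset.range (2 * J + 1), a i * (m (i + 0) g - m (i + 0) g₀)
        ≤ ∑ i ∈ Finset.range (2 * J + 1), |a i| * Δ := by
          apply Finset.sum_le_sum
          intro i hi
          rcases Nat.eq_zero_or_pos i with h | h
          · subst h
            have hzz : m (0 + 0) g - m (0 + 0) g₀ = 0 := he0
            rw [hzz, mul_zero]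
            positivity
          · calc a i * (m (i + 0) g - m (i + 0) g₀)
                ≤ |a i * (m (i + 0) g - m (i + 0) g₀)| := le_abs_self _
              _ = |a i| * |m (i + 0) g - m (i + 0) g₀| := abs_mul _ _
              _ ≤ |a i| * Δ := by
                  apply mul_le_mul_of_nonneg_left _ (abs_nonneg _)
                  exact heΔ (i + 0) (by omega) (by
                    have := Finset.mem_range.mp hi; omega)
      _ = (∑ i ∈ Finset.range (2 * J + 1), |a i|) * Δ := by rw [Finset.sum_mul]
      _ ≤ (1 + M) ^ (2 * J) * Δ := mul_le_mul_of_nonneg_right hasum hΔ0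
  rw [show (1:ℝ) + M = M + 1 from add_comm 1 M] at hasum hP0bound
  -- integrability of F
  have hintF : ∀ t : ℕ, Integrable (fun θ => P (θ - θ₀) * (θ - θ₀) ^ t) g :=
    fun t => integrable_poly_aux θ₀ (2 * J + 1) t a g hintg
  -- bound on |∫ F dg|
  have hFbound : ∀ t : ℕ, |∫ θ, P (θ - θ₀) * (θ - θ₀) ^ t ∂g|
      ≤ M ^ t * ((M + 1) ^ (2 * J) * Δ) := by
    intro t
    have hpt : ∀ᵐ θ ∂g, |P (θ - θ₀) * (θ - θ₀) ^ t| ≤ M ^ t * (P (θ - θ₀) * (θ - θ₀) ^ 0) := by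
      filter_upwards [haeg] with θ hθ
      rw [abs_mul, abs_of_nonneg (hPnn _), abs_pow, pow_zero, mul_one]
      calc P (θ - θ₀) * |θ - θ₀| ^ t ≤ P (θ - θ₀) * M ^ t :=
            mul_le_mul_of_nonneg_left (pow_le_pow_left₀ (abs_nonneg _) (hMb θ hθ) t) (hPnn _)
        _ = M ^ t * P (θ - θ₀) := mul_comm _ _
    calc |∫ θ, P (θ - θ₀) * (θ - θ₀) ^ t ∂g|
        ≤ ∫ θ, |P (θ - θ₀) * (θ - θ₀) ^ t| ∂g := by
          have := norm_integral_le_integral_norm (μ := g)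
            (fun θ => P (θ - θ₀) * (θ - θ₀) ^ t)
          simp only [Real.norm_eq_abs] at this
          exact this
      _ ≤ ∫ θ, M ^ t * (P (θ - θ₀) * (θ - θ₀) ^ 0) ∂g :=
          integral_mono_ae (hintF t).abs ((hintF 0).const_mul _) hpt
      _ = M ^ t * ∫ θ, P (θ - θ₀) * (θ - θ₀) ^ 0 ∂g := integral_const_mul _ _
      _ ≤ M ^ t * ((M + 1) ^ (2 * J) * Δ) :=
          mul_le_mul_of_nonneg_left hP0bound (pow_nonneg hM0 t)
  -- main strong induction
  have main : ∀ n : ℕ, 1 ≤ n → |m n g - m n g₀| ≤ (n : ℝ) * (M + 1) ^ (2 * J * n) * Δ := by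
    intro n
    induction n using Nat.strong_induction_on with
    | _ n IH =>
      intro hn1
      have hncast : (1 : ℝ) ≤ (n : ℝ) := by exact_mod_cast hn1
      have hpow1 : (1 : ℝ) ≤ (M + 1) ^ (2 * J * n) := one_le_pow₀ hM1
      by_cases hle : n ≤ 2 * J
      · calc |m n g - m n g₀| ≤ Δ := heΔ n hn1 hle
          _ = 1 * 1 * Δ := by ring
          _ ≤ (n : ℝ) * (M + 1) ^ (2 * J * n) * Δ := by
              apply mul_le_mul_of_nonneg_right _ hΔ0
              exact mul_le_mul hncast hpow1 zero_le_one (by positivity)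
      · push_neg at hle
        set t := n - 2 * J with ht
        have htn : 2 * J + t = n := by omega
        have ht1 : 1 ≤ t := by omega
        have hexp : 2 * J + 2 * J * (n - 1) = 2 * J * n := by
          have h : n - 1 + 1 = n := by omega
          calc 2 * J + 2 * J * (n - 1) = 2 * J * ((n - 1) + 1) := by ring
            _ = 2 * J * n := by rw [h]
        have hiden : m n g - m n g₀ = (∫ θ, P (θ - θ₀) * (θ - θ₀) ^ t ∂g)
            - ∑ i ∈ Finset.range (2 * J), a i * (m (i + t) g - m (i + t) g₀) := by
          rw [hdiff t, Finset.sum_range_succ, halead, htn]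
          ring
        rw [hiden]
        have hIH : ∀ i ∈ Finset.range (2 * J), |m (i + t) g - m (i + t) g₀|
            ≤ ((n : ℝ) - 1) * (M + 1) ^ (2 * J * (n - 1)) * Δ := by
          intro i hi
          have hin : i + t < n := by have := Finset.mem_range.mp hi; omega
          have h1 : 1 ≤ i + t := by omega
          have hn1' : (0 : ℝ) ≤ (n : ℝ) - 1 := by linarith
          calc |m (i + t) g - m (i + t) g₀|
              ≤ ((i + t : ℕ) : ℝ) * (M + 1) ^ (2 * J * (i + t)) * Δ := IH _ hin h1
            _ ≤ ((n : ℝ) - 1) * (M + 1) ^ (2 * J * (n - 1)) * Δ := by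
                apply mul_le_mul_of_nonneg_right _ hΔ0
                apply mul_le_mul ?_ ?_ (by positivity) hn1'
                · have hc : ((i + t : ℕ) : ℝ) ≤ ((n - 1 : ℕ) : ℝ) := Nat.cast_le.mpr (by omega)
                  rwa [Nat.cast_sub hn1, Nat.cast_one] at hc
                · exact pow_le_pow_right₀ hM1 (Nat.mul_le_mul_left _ (by omega))
        have hsumabs : |∑ i ∈ Finset.range (2 * J), a i * (m (i + t) g - m (i + t) g₀)|
            ≤ (∑ i ∈ Finset.range (2 * J), |a i|)
              * (((n : ℝ) - 1) * (M + 1) ^ (2 * J * (n - 1)) * Δ) := by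
          rw [Finset.sum_mul]
          calc |∑ i ∈ Finset.range (2 * J), a i * (m (i + t) g - m (i + t) g₀)|
              ≤ ∑ i ∈ Finset.range (2 * J), |a i * (m (i + t) g - m (i + t) g₀)| :=
                Finset.abs_sum_le_sum_abs _ _
            _ ≤ ∑ i ∈ Finset.range (2 * J), |a i|
                  * (((n : ℝ) - 1) * (M + 1) ^ (2 * J * (n - 1)) * Δ) := by
                apply Finset.sum_le_sum
                intro i hi
                rw [abs_mul]
                exact mul_le_mul_of_nonneg_left (hIH i hi) (abs_nonneg _)
        have hsum' : ∑ i ∈ Finset.range (2 * J), |a i| ≤ (M + 1) ^ (2 * J) :=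
          le_trans (Finset.sum_le_sum_of_subset_of_nonneg
            (Finset.range_subset_range.mpr (by omega)) (fun _ _ _ => abs_nonneg _)) hasum
        have hn1' : (0 : ℝ) ≤ (n : ℝ) - 1 := by linarith
        have hA : M ^ t * ((M + 1) ^ (2 * J) * Δ) ≤ (M + 1) ^ (2 * J * n) * Δ := by
          have h1 : M ^ t * (M + 1) ^ (2 * J) ≤ (M + 1) ^ (2 * J * n) := by
            calc M ^ t * (M + 1) ^ (2 * J) ≤ (M + 1) ^ t * (M + 1) ^ (2 * J) :=
                  mul_le_mul_of_nonneg_right (pow_le_pow_left₀ hM0 (by linarith) t)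
                    (by positivity)
              _ = (M + 1) ^ (t + 2 * J) := (pow_add _ _ _).symm
              _ = (M + 1) ^ n := by rw [show t + 2 * J = n by omega]
              _ ≤ (M + 1) ^ (2 * J * n) :=
                  pow_le_pow_right₀ hM1 (Nat.le_mul_of_pos_left n (by omega))
          calc M ^ t * ((M + 1) ^ (2 * J) * Δ) = (M ^ t * (M + 1) ^ (2 * J)) * Δ := by ring
            _ ≤ (M + 1) ^ (2 * J * n) * Δ := mul_le_mul_of_nonneg_right h1 hΔ0
        have hB : (∑ i ∈ Finset.range (2 * J), |a i|)
              * (((n : ℝ) - 1) * (M + 1) ^ (2 * J * (n - 1)) * Δ)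
            ≤ ((n : ℝ) - 1) * (M + 1) ^ (2 * J * n) * Δ := by
          calc (∑ i ∈ Finset.range (2 * J), |a i|)
                * (((n : ℝ) - 1) * (M + 1) ^ (2 * J * (n - 1)) * Δ)
              ≤ (M + 1) ^ (2 * J) * (((n : ℝ) - 1) * (M + 1) ^ (2 * J * (n - 1)) * Δ) :=
                mul_le_mul_of_nonneg_right hsum' (by positivity)
            _ = ((n : ℝ) - 1) * ((M + 1) ^ (2 * J) * (M + 1) ^ (2 * J * (n - 1))) * Δ := by ring
            _ = ((n : ℝ) - 1) * (M + 1) ^ (2 * J * n) * Δ := by rw [← pow_add, hexp]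
        calc |(∫ θ, P (θ - θ₀) * (θ - θ₀) ^ t ∂g)
              - ∑ i ∈ Finset.range (2 * J), a i * (m (i + t) g - m (i + t) g₀)|
            ≤ |∫ θ, P (θ - θ₀) * (θ - θ₀) ^ t ∂g|
              + |∑ i ∈ Finset.range (2 * J), a i * (m (i + t) g - m (i + t) g₀)| := abs_sub _ _
          _ ≤ M ^ t * ((M + 1) ^ (2 * J) * Δ)
              + (∑ i ∈ Finset.range (2 * J), |a i|)
                * (((n : ℝ) - 1) * (M + 1) ^ (2 * J * (n - 1)) * Δ) :=
              add_le_add (hFbound t) hsumabs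
          _ ≤ (M + 1) ^ (2 * J * n) * Δ + ((n : ℝ) - 1) * (M + 1) ^ (2 * J * n) * Δ :=
              add_le_add hA hB
          _ = (n : ℝ) * (M + 1) ^ (2 * J * n) * Δ := by ring
  exact main k (by omega)
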